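/- Let 1 < k < n and let G be a simple graph of order n with q_{k+1}(G) = n − 2. Then the complement of G has either k balanced bipartite components or at least k + 1 bipartite components. -/

import Mathlib

open Matrix SimpleGraph
open scoped Classical

/-- The `k`-th largest eigenvalue (1-indexed, counted with multiplicity) of a real
symmetric (Hermitian) matrix; junk value `0` if `M` is not Hermitian or `k` is out of range. -/
noncomputable def kthEig {V : Type*} [Fintype V] [DecidableEq V]
    (M : Matrix V V ℝ) (k : ℕ) : ℝ :=
  if hM : M.IsHermitian then
    if h : k - 1 < Fintype.card V then
      letI f : Fin (Fintype.card V) → ℝ := hM.eigenvalues ∘ (Fintype.equivFin V).symm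
      (f ∘ Tuple.sort f) (Fin.rev ⟨k - 1, h⟩)
    else 0
  else 0

/-- The signless Laplacian `Q(G) = D(G) + A(G)` of a simple graph `G`. -/
noncomputable def signlessLap {V : Type*} [Fintype V] [DecidableEq V]
    (G : SimpleGraph V) [DecidableRel G.Adj] : Matrix V V ℝ :=
  G.degMatrix ℝ + G.adjMatrix ℝ

/-- `qEig G k` is the `k`-th largest signless Laplacian eigenvalue `q_k(G)`. -/
noncomputable def qEig {V : Type*} [Fintype V] [DecidableEq V]
    (G : SimpleGraph V) [DecidableRel G.Adj] (k : ℕ) : ℝ :=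
  kthEig (signlessLap G) k

/-- `c` is a bipartite connected component of `H`: the vertex set of the component splits
into two disjoint classes `U`, `W` such that every edge of the component joins `U` and `W`. -/
def IsBipartiteComponent {V : Type*} (H : SimpleGraph V) (c : H.ConnectedComponent) : Prop :=
  ∃ U W : Set V, U ∪ W = c.supp ∧ Disjoint U W ∧
    ∀ ⦃u v : V⦄, u ∈ c.supp → H.Adj u v → (u ∈ U ∧ v ∈ W) ∨ (u ∈ W ∧ v ∈ U)

/-- `c` is a balanced bipartite connected component of `H`: bipartite with vertex classes
of equal size. -/
def IsBalancedBipartiteComponent {V : Type*} (H : SimpleGraph V)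
    (c : H.ConnectedComponent) : Prop :=
  ∃ U W : Set V, U ∪ W = c.supp ∧ Disjoint U W ∧ U.ncard = W.ncard ∧
    ∀ ⦃u v : V⦄, u ∈ c.supp → H.Adj u v → (u ∈ U ∧ v ∈ W) ∨ (u ∈ W ∧ v ∈ U)

/-- `G` is the complete multipartite graph whose parts are the fibers of `p`:
two vertices are adjacent iff they lie in different parts. -/
def IsCompleteMultipartiteWith {V ι : Type*} (G : SimpleGraph V) (p : V → ι) : Prop :=
  ∀ u v : V, G.Adj u v ↔ p u ≠ p v


-- ===== auxiliary material =====

set_option linter.unusedSectionVars false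
set_option maxHeartbeats 1000000

open Matrix SimpleGraph Finset Module
open scoped Classical RealInnerProductSpace

variable {V : Type*} [Fintype V] [DecidableEq V]

lemma card_filter_equiv {α β : Type*} [Fintype α] [Fintype β]
    (σ : α ≃ β) (p : β → Prop) :
    (Finset.univ.filter fun a => p (σ a)).card = (Finset.univ.filter p).card := by
  refine Finset.card_bij (fun a _ => σ a) (by simp +contextual)
    (fun a _ b _ h => σ.injective h) (fun b hb => ⟨σ.symm b, by simpa using hb, by simp⟩)

/-- Courant–Fischer type bound: if a subspace `S` is strictly below `c` for the quadratic
form of `M`, then the number of eigenvalues `≥ c` plus `dim S` is at most `n`. -/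
lemma eig_count_le {M : Matrix V V ℝ} (hM : M.IsHermitian) (c : ℝ)
    (S : Submodule ℝ (EuclideanSpace ℝ V))
    (hS : ∀ x ∈ S, x ≠ 0 → ⟪x, (WithLp.toLp 2 (M *ᵥ x) : EuclideanSpace ℝ V)⟫ < c * ‖x‖ ^ 2) :
    (Finset.univ.filter fun i => c ≤ hM.eigenvalues i).card + finrank ℝ S
      ≤ Fintype.card V := by
  set t := {i : V // c ≤ hM.eigenvalues i} with ht
  let b : t → EuclideanSpace ℝ V := fun i => hM.eigenvectorBasis i.1
  have hon : Orthonormal ℝ b :=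
    hM.eigenvectorBasis.orthonormal.comp Subtype.val Subtype.val_injective
  set P := Submodule.span ℝ (Set.range b) with hP
  have hbij : ∀ i j : t, ⟪b i, b j⟫ = if i = j then 1 else 0 := by
    intro i j
    rcases eq_or_ne i j with rfl | hn
    · rw [if_pos rfl, real_inner_self_eq_norm_sq, hon.1 i, one_pow]
    · rw [if_neg hn]; exact hon.2 hn
  have key : ∀ x ∈ P, c * ‖x‖ ^ 2 ≤ ⟪x, (WithLp.toLp 2 (M *ᵥ x) : EuclideanSpace ℝ V)⟫ := by
    intro x hx
    obtain ⟨a, rfl⟩ := (Submodule.mem_span_range_iff_exists_fun ℝ).1 hx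
    have hinner : ∀ d : t → ℝ,
        ⟪(∑ i : t, a i • b i : EuclideanSpace ℝ V), ∑ j : t, d j • b j⟫
          = ∑ i : t, a i * d i := by
      intro d
      rw [sum_inner]
      refine Finset.sum_congr rfl fun i _ => ?_
      rw [inner_sum]
      simp only [real_inner_smul_left, real_inner_smul_right, hbij, mul_ite, mul_one, mul_zero]
      rw [Finset.sum_eq_single i (fun j _ hj => if_neg (Ne.symm hj))
        (fun h => absurd (Finset.mem_univ i) h), if_pos rfl, mul_comm]
    have hMx : (WithLp.toLp 2 (M *ᵥ (∑ i : t, a i • b i : EuclideanSpace ℝ V)) : EuclideanSpace ℝ V)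
        = ∑ i : t, (a i * hM.eigenvalues i.1) • b i := by
      have h1 : (M *ᵥ (∑ i : t, a i • b i : EuclideanSpace ℝ V) : V → ℝ)
          = M.mulVecLin (∑ i : t, a i • b i : EuclideanSpace ℝ V) := rfl
      rw [h1, WithLp.ofLp_sum, map_sum, WithLp.toLp_sum]
      refine Finset.sum_congr rfl fun i _ => ?_
      rw [WithLp.ofLp_smul, _root_.map_smul]
      have h2 : M.mulVecLin (b i) = hM.eigenvalues i.1 • (b i).ofLp := hM.mulVec_eigenvectorBasis i.1
      rw [h2, smul_smul]
      rfl
    rw [hMx, hinner]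
    have hnorm : ‖(∑ i : t, a i • b i : EuclideanSpace ℝ V)‖ ^ 2 = ∑ i : t, a i * a i := by
      rw [← real_inner_self_eq_norm_sq, hinner]
    rw [hnorm, Finset.mul_sum]
    refine Finset.sum_le_sum fun i _ => ?_
    have hc : c ≤ hM.eigenvalues i.1 := i.2
    nlinarith [sq_nonneg (a i)]
  have hdisj : S ⊓ P = ⊥ := by
    rw [Submodule.eq_bot_iff]
    intro x hx
    by_contra hx0
    exact absurd (key x hx.2) (not_le.2 (hS x hx.1 hx0))
  have hrank := Submodule.finrank_sup_add_finrank_inf_eq S P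
  rw [hdisj, finrank_bot] at hrank
  have hle : finrank ℝ ↥(S ⊔ P) ≤ finrank ℝ (EuclideanSpace ℝ V) := Submodule.finrank_le _
  rw [finrank_euclideanSpace] at hle
  have hPrank : finrank ℝ P = Fintype.card t :=
    finrank_span_eq_card hon.linearIndependent
  have hcard : Fintype.card t = (Finset.univ.filter fun i => c ≤ hM.eigenvalues i).card := by
    convert Fintype.card_subtype (fun i => c ≤ hM.eigenvalues i) using 2
  omega



lemma deg_sum (H : SimpleGraph V) [DecidableRel H.Adj] (u : V) :
    ∑ v, (if H.Adj u v then (1:ℝ) else 0) = H.degree u := by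
  rw [Finset.sum_boole]
  congr 1
  rw [SimpleGraph.degree, SimpleGraph.neighborFinset_eq_filter]

lemma form_eq (H : SimpleGraph V) [DecidableRel H.Adj] (x : V → ℝ) :
    x ⬝ᵥ (signlessLap H *ᵥ x)
      = ∑ u, (H.degree u : ℝ) * x u ^ 2 + ∑ u, ∑ v, (if H.Adj u v then x u * x v else 0) := by
  rw [signlessLap, Matrix.add_mulVec, dotProduct_add]
  congr 1
  · rw [dotProduct]
    refine Finset.sum_congr rfl fun u _ => ?_
    rw [SimpleGraph.degMatrix, Matrix.mulVec_diagonal]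
    ring
  · rw [dotProduct]
    refine Finset.sum_congr rfl fun u _ => ?_
    rw [SimpleGraph.adjMatrix_mulVec_apply, Finset.mul_sum,
      SimpleGraph.neighborFinset_eq_filter, Finset.sum_filter]

lemma adjsym_sum (H : SimpleGraph V) [DecidableRel H.Adj] (f : V → V → ℝ) :
    ∑ u, ∑ v, (if H.Adj u v then f u v else 0)
      = ∑ u, ∑ v, (if H.Adj u v then f v u else 0) := by
  rw [Finset.sum_comm]
  refine Finset.sum_congr rfl fun v _ => Finset.sum_congr rfl fun u _ => ?_
  congr 1
  exact propext (H.adj_comm u v)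

lemma deg_weighted_sum (H : SimpleGraph V) [DecidableRel H.Adj] (g : V → ℝ) :
    ∑ u, ∑ v, (if H.Adj u v then g u else 0) = ∑ u, (H.degree u : ℝ) * g u := by
  refine Finset.sum_congr rfl fun u _ => ?_
  rw [← deg_sum H u, Finset.sum_mul]
  exact Finset.sum_congr rfl fun v _ => by split <;> simp

lemma two_mul_form (H : SimpleGraph V) [DecidableRel H.Adj] (x : V → ℝ) :
    2 * (x ⬝ᵥ (signlessLap H *ᵥ x))
      = ∑ u, ∑ v, (if H.Adj u v then (x u + x v) ^ 2 else 0) := by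
  have expand : ∀ u v : V, (if H.Adj u v then (x u + x v) ^ 2 else 0)
      = (if H.Adj u v then x u ^ 2 else 0)
        + (if H.Adj u v then x v ^ 2 else 0)
        + 2 * (if H.Adj u v then x u * x v else 0) := by
    intro u v; split <;> ring
  rw [Finset.sum_congr rfl fun u (_ : u ∈ univ) =>
    Finset.sum_congr rfl fun v (_ : v ∈ univ) => expand u v]
  simp only [Finset.sum_add_distrib, ← Finset.mul_sum]
  have e1 : ∑ u, ∑ v, (if H.Adj u v then x u ^ 2 else 0)
      = ∑ u, (H.degree u : ℝ) * x u ^ 2 := deg_weighted_sum H _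
  have e2 : ∑ u, ∑ v, (if H.Adj u v then x v ^ 2 else 0)
      = ∑ u, (H.degree u : ℝ) * x u ^ 2 := by
    rw [adjsym_sum H (fun u v => x v ^ 2)]
    exact deg_weighted_sum H _
  rw [e1, e2, form_eq]
  ring

lemma form_nonneg (H : SimpleGraph V) [DecidableRel H.Adj] (x : V → ℝ) :
    0 ≤ x ⬝ᵥ (signlessLap H *ᵥ x) := by
  have h := two_mul_form H x
  have : 0 ≤ ∑ u, ∑ v, (if H.Adj u v then (x u + x v) ^ 2 else 0) :=
    Finset.sum_nonneg fun u _ => Finset.sum_nonneg fun v _ => by positivity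
  linarith

lemma form_eq_zero_imp (H : SimpleGraph V) [DecidableRel H.Adj] {x : V → ℝ}
    (hx : x ⬝ᵥ (signlessLap H *ᵥ x) = 0) :
    ∀ ⦃u v : V⦄, H.Adj u v → x u = - x v := by
  intro u v huv
  have h := two_mul_form H x
  rw [hx, mul_zero] at h
  have hterm := (Finset.sum_eq_zero_iff_of_nonneg
    (fun u _ => Finset.sum_nonneg fun v _ => by positivity)).1 h.symm u (Finset.mem_univ u)
  have hterm2 := (Finset.sum_eq_zero_iff_of_nonneg (fun v _ => by positivity)).1 hterm v
    (Finset.mem_univ v)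
  rw [if_pos huv] at hterm2
  have := pow_eq_zero_iff (n := 2) (by norm_num) |>.1 hterm2
  linarith

/-- The quadratic form of the signless Laplacian of `G` in terms of the complement. -/
lemma form_compl (G : SimpleGraph V) [DecidableRel G.Adj] (x : V → ℝ) :
    x ⬝ᵥ (signlessLap G *ᵥ x)
      = ((Fintype.card V : ℝ) - 2) * (x ⬝ᵥ x) + (∑ v, x v) ^ 2
        - x ⬝ᵥ (signlessLap Gᶜ *ᵥ x) := by
  have hdeg : ∀ u : V, (G.degree u : ℝ) + (Gᶜ.degree u : ℝ) = (Fintype.card V : ℝ) - 1 := by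
    intro u
    have h1 : G.degree u < Fintype.card V := G.degree_lt_card_verts u
    have := G.degree_compl (v := u)
    rw [this]
    push_cast [Nat.cast_sub (by omega : G.degree u ≤ Fintype.card V - 1),
      Nat.cast_sub (by omega : 1 ≤ Fintype.card V)]
    ring
  have hadj : ∀ u v : V, (if G.Adj u v then x u * x v else 0)
      + (if Gᶜ.Adj u v then x u * x v else 0)
      = (if u = v then 0 else x u * x v) := by
    intro u v
    by_cases he : u = v
    · subst he; simp
    · by_cases ha : G.Adj u v
      · have : ¬ Gᶜ.Adj u v := by simp [SimpleGraph.compl_adj, ha]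
        simp [ha, this, he]
      · have : Gᶜ.Adj u v := ⟨he, ha⟩
        simp [ha, this, he]
  have key : x ⬝ᵥ (signlessLap G *ᵥ x) + x ⬝ᵥ (signlessLap Gᶜ *ᵥ x)
      = ((Fintype.card V : ℝ) - 2) * (∑ u, x u ^ 2) + (∑ v, x v) ^ 2 := by
    rw [form_eq, form_eq]
    have sum1 : (∑ u, (G.degree u : ℝ) * x u ^ 2) + ∑ u, (Gᶜ.degree u : ℝ) * x u ^ 2
        = ((Fintype.card V : ℝ) - 1) * ∑ u, x u ^ 2 := by
      rw [← Finset.sum_add_distrib, Finset.mul_sum]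
      refine Finset.sum_congr rfl fun u _ => ?_
      rw [← add_mul, hdeg u]
    have sum2 : (∑ u, ∑ v, (if G.Adj u v then x u * x v else 0))
        + ∑ u, ∑ v, (if Gᶜ.Adj u v then x u * x v else 0)
        = (∑ v, x v) ^ 2 - ∑ u, x u ^ 2 := by
      rw [← Finset.sum_add_distrib]
      have : ∀ u : V, (∑ v, (if G.Adj u v then x u * x v else 0))
          + ∑ v, (if Gᶜ.Adj u v then x u * x v else 0)
          = (∑ v, x u * x v) - x u ^ 2 := by
        intro u
        rw [← Finset.sum_add_distrib,
          Finset.sum_congr rfl fun v (_ : v ∈ univ) => hadj u v]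
        have hsplit : ∀ v : V, (if u = v then (0:ℝ) else x u * x v)
            = x u * x v - (if u = v then x u * x v else 0) := by
          intro v; split <;> simp
        rw [Finset.sum_congr rfl fun v (_ : v ∈ univ) => hsplit v, Finset.sum_sub_distrib,
          Finset.sum_ite_eq univ u (fun v => x u * x v)]
        simp [pow_two]
      rw [Finset.sum_congr rfl fun u (_ : u ∈ univ) => this u, Finset.sum_sub_distrib]
      rw [pow_two]
      congr 1
      rw [Finset.sum_mul_sum]
    linarith [sum1, sum2]
  have hxx : x ⬝ᵥ x = ∑ u, x u ^ 2 := by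
    rw [dotProduct]
    exact Finset.sum_congr rfl fun u _ => (pow_two (x u)).symm
  rw [hxx]
  linarith [key]

section Kernel

variable (H : SimpleGraph V)

/-- The kernel of the signless Laplacian, described combinatorially, as a submodule of
Euclidean space. -/
def kerQ : Submodule ℝ (EuclideanSpace ℝ V) where
  carrier := {x | ∀ ⦃u v : V⦄, H.Adj u v → x u = - x v}
  zero_mem' := by intro u v _; simp
  add_mem' := by
    intro a b ha hb u v huv
    have h1 := ha huv; have h2 := hb huv
    show a u + b u = -(a v + b v)
    rw [h1, h2]; ring
  smul_mem' := by
    intro c a ha u v huv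
    have h1 := ha huv
    show c * a u = -(c * a v)
    rw [h1]; ring

variable {H}

lemma kerQ_zero_prop {x : EuclideanSpace ℝ V} (hx : x ∈ kerQ H) {u v : V}
    (hr : H.Reachable u v) (h0 : x u = 0) : x v = 0 := by
  obtain ⟨w⟩ := hr
  induction w with
  | nil => exact h0
  | @cons a b c hadj p ih =>
    exact ih (by rw [hx hadj] at h0; linarith)

lemma kerQ_sign_prop {x : EuclideanSpace ℝ V} (hx : x ∈ kerQ H) {u v : V}
    (hr : H.Reachable u v) : x v = x u ∨ x v = - x u := by
  obtain ⟨w⟩ := hr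
  induction w with
  | nil => exact Or.inl rfl
  | @cons a b c hadj p ih =>
    have hb : x b = - x a := by rw [hx hadj, neg_neg]
    rcases ih with h1 | h1
    · rw [h1, hb]
      exact Or.inr rfl
    · rw [h1, hb, neg_neg]
      exact Or.inl rfl

lemma kerQ_bipartite {x : EuclideanSpace ℝ V} (hx : x ∈ kerQ H) {v : V} (h0 : x v ≠ 0) :
    IsBipartiteComponent H (H.connectedComponentMk v) := by
  refine ⟨{w ∈ (H.connectedComponentMk v).supp | x w = x v},
    {w ∈ (H.connectedComponentMk v).supp | x w = - x v}, ?_, ?_, ?_⟩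
  · apply Set.Subset.antisymm
    · rintro w (⟨hw, _⟩ | ⟨hw, _⟩) <;> exact hw
    · intro w hw
      have hr : H.Reachable v w := by
        rw [SimpleGraph.ConnectedComponent.mem_supp_iff, SimpleGraph.ConnectedComponent.eq] at hw
        exact hw.symm
      rcases kerQ_sign_prop hx hr with h | h
      · exact Or.inl ⟨hw, h⟩
      · exact Or.inr ⟨hw, h⟩
  · rw [Set.disjoint_left]
    rintro w ⟨_, h1⟩ ⟨_, h2⟩
    rw [h1] at h2
    exact h0 (by linarith)
  · intro u w hu hadj
    have hw : w ∈ (H.connectedComponentMk v).supp := by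
      rw [SimpleGraph.ConnectedComponent.mem_supp_iff] at hu ⊢
      rw [← hu]
      exact SimpleGraph.ConnectedComponent.connectedComponentMk_eq_of_adj hadj.symm
    have hu' : u ∈ (H.connectedComponentMk v).supp := hu
    have hr : H.Reachable v u := by
      rw [SimpleGraph.ConnectedComponent.mem_supp_iff, SimpleGraph.ConnectedComponent.eq] at hu
      exact hu.symm
    have hxw : x w = - x u := by rw [hx hadj]; ring_nf
    rcases kerQ_sign_prop hx hr with h | h
    · exact Or.inl ⟨⟨hu', h⟩, hw, by rw [hxw, h]⟩
    · exact Or.inr ⟨⟨hu', h⟩, hw, by rw [hxw, h, neg_neg]⟩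

lemma kerQ_rank_le [DecidableRel H.Adj] :
    finrank ℝ (kerQ H) ≤ {c : H.ConnectedComponent | IsBipartiteComponent H c}.ncard := by
  classical
  set B := {c : H.ConnectedComponent | IsBipartiteComponent H c} with hB
  let φ : kerQ H →ₗ[ℝ] (↥B → ℝ) :=
    { toFun := fun x c => x.1 c.1.out
      map_add' := fun a b => rfl
      map_smul' := fun m a => rfl }
  have hinj : Function.Injective φ := by
    rw [← LinearMap.ker_eq_bot, Submodule.eq_bot_iff]
    intro x hx
    ext v
    by_contra h0
    have hb : H.connectedComponentMk v ∈ B := kerQ_bipartite x.2 h0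
    have hz : x.1 (H.connectedComponentMk v).out = 0 := congrFun hx ⟨_, hb⟩
    have hr : H.Reachable (H.connectedComponentMk v).out v := by
      rw [← SimpleGraph.ConnectedComponent.eq]
      exact (H.connectedComponentMk v).out_eq
    exact h0 (kerQ_zero_prop x.2 hr hz)
  calc finrank ℝ (kerQ H) ≤ finrank ℝ (↥B → ℝ) :=
        LinearMap.finrank_le_finrank_of_injective hinj
    _ = Fintype.card ↥B := by rw [Module.finrank_pi ℝ]
    _ = B.ncard := by rw [Set.ncard_eq_toFinset_card', Set.toFinset_card]

end Kernel

lemma mem_kerQ {H : SimpleGraph V} {x : EuclideanSpace ℝ V} :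
    x ∈ kerQ H ↔ ∀ ⦃u v : V⦄, H.Adj u v → x u = - x v := Iff.rfl

lemma inner_dot (x y : EuclideanSpace ℝ V) : ⟪x, y⟫ = x ⬝ᵥ y := by
  rw [PiLp.inner_apply, dotProduct]
  simp [RCLike.inner_apply, starRingEnd_apply, mul_comm]

lemma signlessLap_isHermitian (G : SimpleGraph V) [DecidableRel G.Adj] :
    (signlessLap G).IsHermitian := by
  apply Matrix.IsHermitian.add
  · rw [SimpleGraph.degMatrix]
    exact Matrix.isHermitian_diagonal _
  · show (G.adjMatrix ℝ)ᴴ = G.adjMatrix ℝ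
    rw [Matrix.conjTranspose]
    have := SimpleGraph.transpose_adjMatrix (α := ℝ) (G := G)
    rw [show ((G.adjMatrix ℝ)ᵀ.map star) = (G.adjMatrix ℝ)ᵀ by ext i j; simp [if_congr (G.adj_comm i j) rfl rfl], this]


/-- Let `1 < k < n` and let `G` be a graph of order `n` with `q_{k+1}(G) = n - 2`. Then
the complement of `G` has `k` balanced bipartite components or at least `k + 1` bipartite
components. -/
theorem components_of_qk_succ (n k : ℕ) (hk1 : 1 < k) (hkn : k < n)
    (G : SimpleGraph (Fin n)) [DecidableRel G.Adj]
    (h : qEig G (k + 1) = (n : ℝ) - 2) :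
    k ≤ {c : Gᶜ.ConnectedComponent | IsBalancedBipartiteComponent Gᶜ c}.ncard ∨
    k + 1 ≤ {c : Gᶜ.ConnectedComponent | IsBipartiteComponent Gᶜ c}.ncard := by

  have hn : 0 < n := by omega
  have hM : (signlessLap G).IsHermitian := signlessLap_isHermitian G
  -- Step 1 : eigenvalue count from the hypothesis
  have hcount : k + 1 ≤ (Finset.univ.filter fun i : Fin n =>
      (n : ℝ) - 2 ≤ hM.eigenvalues i).card := by
    unfold qEig kthEig at h
    rw [dif_pos hM] at h
    have hlt : k + 1 - 1 < Fintype.card (Fin n) := by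
      rw [Fintype.card_fin]; omega
    rw [dif_pos hlt] at h
    set f : Fin (Fintype.card (Fin n)) → ℝ :=
      hM.eigenvalues ∘ (Fintype.equivFin (Fin n)).symm with hf
    have hmono := Tuple.monotone_sort f
    have hsub : Finset.Ici (Fin.rev ⟨k + 1 - 1, hlt⟩)
        ⊆ Finset.univ.filter (fun j => (n : ℝ) - 2 ≤ (f ∘ Tuple.sort f) j) := by
      intro j hj
      rw [Finset.mem_filter]
      refine ⟨Finset.mem_univ _, ?_⟩
      rw [← h]
      exact hmono (Finset.mem_Ici.1 hj)
    have hIci : k + 1 ≤ (Finset.Ici (Fin.rev ⟨k + 1 - 1, hlt⟩)).card := by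
      rw [Fin.card_Ici]
      have hval : (Fin.rev (⟨k + 1 - 1, hlt⟩ : Fin (Fintype.card (Fin n)))).val
          = Fintype.card (Fin n) - (k + 1 - 1 + 1) := Fin.val_rev _
      rw [hval, Fintype.card_fin]
      omega
    have h1 : k + 1 ≤ (Finset.univ.filter
        (fun j => (n : ℝ) - 2 ≤ (f ∘ Tuple.sort f) j)).card :=
      le_trans hIci (Finset.card_le_card hsub)
    have h2 : (Finset.univ.filter (fun j => (n : ℝ) - 2 ≤ (f ∘ Tuple.sort f) j)).card
        = (Finset.univ.filter fun i : Fin n => (n : ℝ) - 2 ≤ hM.eigenvalues i).card :=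
      card_filter_equiv ((Tuple.sort f).trans (Fintype.equivFin (Fin n)).symm)
        (fun i : Fin n => (n : ℝ) - 2 ≤ hM.eigenvalues i)
    omega
  -- common objects
  set c : ℝ := (n : ℝ) - 2 with hc
  by_cases hE : ∃ u v : Fin n, Gᶜ.Adj u v
  · -- the complement has an edge
    have hone : (WithLp.toLp 2 (fun _ : Fin n => (1 : ℝ)) : EuclideanSpace ℝ (Fin n)) ∉ kerQ Gᶜ := by
      obtain ⟨u, v, huv⟩ := hE
      intro hmem
      have := hmem huv
      norm_num at this
    set one : EuclideanSpace ℝ (Fin n) := WithLp.toLp 2 (fun _ : Fin n => (1 : ℝ)) with hone_def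
    have hone0 : one ≠ 0 := by
      intro h0
      have := congrArg (fun y : EuclideanSpace ℝ (Fin n) => y ⟨0, hn⟩) h0
      norm_num at this
    -- the strict quadratic form bound
    have hformlt : ∀ x : EuclideanSpace ℝ (Fin n), x ∉ kerQ Gᶜ → (∑ v, x v) = 0 →
        ⟪x, (WithLp.toLp 2 (signlessLap G *ᵥ x) : EuclideanSpace ℝ (Fin n))⟫ < c * ‖x‖ ^ 2 := by
      intro x hxK hxs
      have hpos : 0 < x ⬝ᵥ (signlessLap Gᶜ *ᵥ x) := by
        rcases (form_nonneg Gᶜ x).lt_or_eq with hlt | heq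
        · exact hlt
        · exact absurd (show x ∈ kerQ Gᶜ from fun u v huv =>
            form_eq_zero_imp Gᶜ heq.symm huv) hxK
      have hid := form_compl G x
      have hinner : ⟪x, (WithLp.toLp 2 (signlessLap G *ᵥ x) : EuclideanSpace ℝ (Fin n))⟫
          = x ⬝ᵥ (signlessLap G *ᵥ x) := inner_dot _ _
      have hnorm : ‖x‖ ^ 2 = x ⬝ᵥ x := by rw [← real_inner_self_eq_norm_sq, inner_dot]
      rw [hinner, hnorm, hid, Fintype.card_fin, hxs, hc]
      norm_num
      linarith [hpos]
    -- membership facts for S₀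
    set S₀ : Submodule ℝ (EuclideanSpace ℝ (Fin n)) := (kerQ Gᶜ)ᗮ ⊓ (ℝ ∙ one)ᗮ with hS₀def
    have hS₀mem : ∀ x ∈ S₀, x ≠ 0 → x ∉ kerQ Gᶜ ∧ (∑ v, x v) = 0 := by
      intro x hx hx0
      obtain ⟨hx1, hx2⟩ := Submodule.mem_inf.1 hx
      constructor
      · intro hxK
        have h0 : ⟪x, x⟫ = 0 := (Submodule.mem_orthogonal (kerQ Gᶜ) x).1 hx1 x hxK
        exact hx0 (inner_self_eq_zero.1 h0)
      · have h0 : ⟪one, x⟫ = 0 := (Submodule.mem_orthogonal _ x).1 hx2 one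
          (Submodule.mem_span_singleton_self one)
        rw [inner_dot] at h0
        simpa [dotProduct, hone_def] using h0
    have hS₀lt : ∀ x ∈ S₀, x ≠ 0 →
        ⟪x, (WithLp.toLp 2 (signlessLap G *ᵥ x) : EuclideanSpace ℝ (Fin n))⟫ < c * ‖x‖ ^ 2 := by
      intro x hx hx0
      obtain ⟨h1, h2⟩ := hS₀mem x hx hx0
      exact hformlt x h1 h2
    -- rank bookkeeping
    have hKrank := kerQ_rank_le (H := Gᶜ)
    have hKperp : finrank ℝ (kerQ Gᶜ) + finrank ℝ (kerQ Gᶜ)ᗮ = n := by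
      rw [Submodule.finrank_add_finrank_orthogonal, finrank_euclideanSpace, Fintype.card_fin]
    have honeperp : 1 + finrank ℝ (ℝ ∙ one)ᗮ = n := by
      have h1 := Submodule.finrank_add_finrank_orthogonal (K := (ℝ ∙ one))
      rw [finrank_span_singleton hone0, finrank_euclideanSpace, Fintype.card_fin] at h1
      exact h1
    have hS₀rank : finrank ℝ (kerQ Gᶜ)ᗮ + finrank ℝ (ℝ ∙ one)ᗮ ≤ finrank ℝ S₀ + n := by
      have h1 := Submodule.finrank_sup_add_finrank_inf_eq (kerQ Gᶜ)ᗮ (ℝ ∙ one)ᗮ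
      have h2 := Submodule.finrank_le ((kerQ Gᶜ)ᗮ ⊔ (ℝ ∙ one)ᗮ)
      rw [finrank_euclideanSpace, Fintype.card_fin] at h2
      rw [hS₀def]
      omega
    by_cases hbal : ∀ cc : Gᶜ.ConnectedComponent,
        IsBipartiteComponent Gᶜ cc → IsBalancedBipartiteComponent Gᶜ cc
    · -- all bipartite components balanced
      left
      have hsets : {cc : Gᶜ.ConnectedComponent | IsBalancedBipartiteComponent Gᶜ cc}
          = {cc : Gᶜ.ConnectedComponent | IsBipartiteComponent Gᶜ cc} := by
        apply Set.eq_of_subset_of_subset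
        · rintro cc ⟨U, W, hUW, hd, _, he⟩
          exact ⟨U, W, hUW, hd, he⟩
        · intro cc hcc
          exact hbal cc hcc
      rw [hsets]
      have hcnt := eig_count_le hM c S₀ hS₀lt
      rw [Fintype.card_fin] at hcnt
      omega
    · -- some bipartite component is unbalanced
      right
      push_neg at hbal
      obtain ⟨c0, hc0bip, hc0nbal⟩ := hbal
      obtain ⟨U, W, hUW, hdisj, hedge⟩ := hc0bip
      have hne : U.ncard ≠ W.ncard := fun hcard =>
        hc0nbal ⟨U, W, hUW, hdisj, hcard, hedge⟩
      -- the signed indicator vector of the bipartition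
      set x0 : EuclideanSpace ℝ (Fin n) :=
        WithLp.toLp 2 (fun v => if v ∈ U then (1 : ℝ) else if v ∈ W then -1 else 0) with hx0def
      have hUsub : U ⊆ c0.supp := hUW ▸ Set.subset_union_left
      have hWsub : W ⊆ c0.supp := hUW ▸ Set.subset_union_right
      have hx0K : x0 ∈ kerQ Gᶜ := by
        intro u v huv
        by_cases hu : u ∈ c0.supp
        · rcases hedge hu huv with ⟨h1, h2⟩ | ⟨h1, h2⟩
          · have hvU : v ∉ U := Set.disjoint_right.1 hdisj h2
            simp [hx0def, h1, h2, hvU]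
          · have huU : u ∉ U := Set.disjoint_right.1 hdisj h1
            have hvW : v ∉ W := Set.disjoint_left.1 hdisj h2
            simp [hx0def, h1, h2, huU, hvW]
        · have hv : v ∉ c0.supp := by
            intro hv
            apply hu
            rw [SimpleGraph.ConnectedComponent.mem_supp_iff] at hv ⊢
            rw [← hv]
            exact SimpleGraph.ConnectedComponent.connectedComponentMk_eq_of_adj huv
          have h1 : u ∉ U := fun hh => hu (hUsub hh)
          have h2 : u ∉ W := fun hh => hu (hWsub hh)
          have h3 : v ∉ U := fun hh => hv (hUsub hh)
          have h4 : v ∉ W := fun hh => hv (hWsub hh)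
          simp [hx0def, h1, h2, h3, h4]
      have hx0split : ∀ v, x0 v = (if v ∈ U.toFinset then (1:ℝ) else 0)
          - (if v ∈ W.toFinset then (1:ℝ) else 0) := by
        intro v
        by_cases hU : v ∈ U
        · have hW : v ∉ W := Set.disjoint_left.1 hdisj hU
          simp [hx0def, hU, hW]
        · by_cases hW : v ∈ W <;> simp [hx0def, hU, hW]
      have hx0sq : ∀ v, x0 v * x0 v = (if v ∈ U.toFinset then (1:ℝ) else 0)
          + (if v ∈ W.toFinset then (1:ℝ) else 0) := by
        intro v
        by_cases hU : v ∈ U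
        · have hW : v ∉ W := Set.disjoint_left.1 hdisj hU
          simp [hx0def, hU, hW]
        · by_cases hW : v ∈ W <;> simp [hx0def, hU, hW]
      have hsum_x0 : ∑ v, x0 v = (U.ncard : ℝ) - W.ncard := by
        rw [Finset.sum_congr rfl fun v (_ : v ∈ univ) => hx0split v, Finset.sum_sub_distrib,
          Finset.sum_boole, Finset.sum_boole, Set.ncard_eq_toFinset_card' U,
          Set.ncard_eq_toFinset_card' W]
        simp [Finset.filter_mem_eq_inter]
      have hsq_x0 : ∑ v, x0 v * x0 v = (U.ncard : ℝ) + W.ncard := by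
        rw [Finset.sum_congr rfl fun v (_ : v ∈ univ) => hx0sq v, Finset.sum_add_distrib,
          Finset.sum_boole, Finset.sum_boole, Set.ncard_eq_toFinset_card' U,
          Set.ncard_eq_toFinset_card' W]
        simp [Finset.filter_mem_eq_inter]
      have hsuppcard : c0.supp.ncard = U.ncard + W.ncard := by
        rw [← hUW, Set.ncard_union_eq hdisj (Set.toFinite U) (Set.toFinite W)]
      have hm_le : U.ncard + W.ncard ≤ n := by
        rw [← hsuppcard]
        calc c0.supp.ncard ≤ (Set.univ : Set (Fin n)).ncard :=
              Set.ncard_le_ncard (Set.subset_univ _) (Set.toFinite _)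
          _ = n := by rw [Set.ncard_univ, Nat.card_eq_fintype_card, Fintype.card_fin]
      have hm_pos : 1 ≤ U.ncard + W.ncard := by
        rw [← hsuppcard]
        have : c0.out ∈ c0.supp := by
          rw [SimpleGraph.ConnectedComponent.mem_supp_iff]
          exact c0.out_eq
        have hne' : c0.supp.Nonempty := ⟨c0.out, this⟩
        have := Set.ncard_pos (Set.toFinite c0.supp) |>.2 hne'
        omega
      have hsupp_univ : U.ncard + W.ncard = n → c0.supp = Set.univ := by
        intro hcard
        refine Set.eq_of_subset_of_ncard_le (Set.subset_univ _) ?_ (Set.toFinite _)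
        rw [Set.ncard_univ, Nat.card_eq_fintype_card, Fintype.card_fin, hsuppcard, hcard]
      have hcaseW : ¬(W.ncard = 0 ∧ U.ncard + W.ncard = n) := by
        rintro ⟨h1, h2⟩
        have hWe : W = ∅ := (Set.ncard_eq_zero (Set.toFinite W)).1 h1
        obtain ⟨u₀, w₀, hadj⟩ := hE
        have hu₀ : u₀ ∈ c0.supp := by rw [hsupp_univ h2]; exact Set.mem_univ _
        rcases hedge hu₀ hadj with ⟨_, hw⟩ | ⟨hw, _⟩ <;>
          · rw [hWe] at hw; exact hw
      have hcaseU : ¬(U.ncard = 0 ∧ U.ncard + W.ncard = n) := by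
        rintro ⟨h1, h2⟩
        have hUe : U = ∅ := (Set.ncard_eq_zero (Set.toFinite U)).1 h1
        obtain ⟨u₀, w₀, hadj⟩ := hE
        have hu₀ : u₀ ∈ c0.supp := by rw [hsupp_univ h2]; exact Set.mem_univ _
        rcases hedge hu₀ hadj with ⟨hw, _⟩ | ⟨_, hw⟩ <;>
          · rw [hUe] at hw; exact hw
      have hkey : ((U.ncard : ℝ) - W.ncard) * ((U.ncard : ℝ) - W.ncard)
          - n * ((U.ncard : ℝ) + W.ncard) ≠ 0 := by
        intro h0
        set a : ℝ := (U.ncard : ℝ) with ha_def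
        set b : ℝ := (W.ncard : ℝ) with hb_def
        have hab0 : 0 ≤ a := Nat.cast_nonneg _
        have hbb0 : 0 ≤ b := Nat.cast_nonneg _
        have hle : a + b ≤ n := by rw [ha_def, hb_def]; exact_mod_cast hm_le
        have hpos : 1 ≤ a + b := by rw [ha_def, hb_def]; exact_mod_cast hm_pos
        have hsq : (a - b) * (a - b) ≤ (a + b) * (a + b) := by nlinarith [mul_nonneg hab0 hbb0]
        have heq : a + b = n := by nlinarith
        have hab : a * b = 0 := by nlinarith
        have heq' : U.ncard + W.ncard = n := by
          rw [ha_def, hb_def] at heq; exact_mod_cast heq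
        rcases mul_eq_zero.1 hab with hA | hB
        · rw [ha_def] at hA
          exact hcaseU ⟨by exact_mod_cast hA, heq'⟩
        · rw [hb_def] at hB
          exact hcaseW ⟨by exact_mod_cast hB, heq'⟩
      set s : ℝ := (U.ncard : ℝ) - W.ncard with hs_def
      have hs0 : s ≠ 0 := by
        rw [hs_def]
        intro h0
        exact hne (Nat.cast_injective (by linarith : ((U.ncard : ℝ)) = W.ncard))
      set v₂ : EuclideanSpace ℝ (Fin n) := s • one - (n : ℝ) • x0 with hv₂def
      have hv₂app : ∀ v, v₂ v = s * 1 - n * x0 v := fun v => rfl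
      have hx0one : ⟪x0, one⟫ = s := by
        rw [inner_dot, dotProduct]
        simp only [hone_def, mul_one]
        exact hsum_x0
      have hx0x0 : ⟪x0, x0⟫ = (U.ncard : ℝ) + W.ncard := by
        rw [inner_dot, dotProduct, hsq_x0]
      have hv₂inner : ⟪x0, v₂⟫ ≠ 0 := by
        rw [hv₂def, inner_sub_right, real_inner_smul_right, real_inner_smul_right,
          hx0one, hx0x0]
        exact fun h0 => hkey (by rw [hs_def] at h0 ⊢; linarith)
      have hv₂0 : v₂ ≠ 0 := by
        intro h0
        rw [h0, inner_zero_right] at hv₂inner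
        exact hv₂inner rfl
      set S₂ : Submodule ℝ (EuclideanSpace ℝ (Fin n)) := S₀ ⊔ (ℝ ∙ v₂) with hS₂def
      have hv₂S₀ : v₂ ∉ S₀ := by
        intro hmem
        obtain ⟨h1, _⟩ := Submodule.mem_inf.1 hmem
        exact hv₂inner ((Submodule.mem_orthogonal _ v₂).1 h1 x0 hx0K)
      have hS₂rank : finrank ℝ S₂ = finrank ℝ S₀ + 1 := by
        have hinf : S₀ ⊓ (ℝ ∙ v₂) = ⊥ := by
          rw [Submodule.eq_bot_iff]
          rintro y ⟨hy1, hy2⟩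
          obtain ⟨a, rfl⟩ := Submodule.mem_span_singleton.1 hy2
          rcases eq_or_ne a 0 with rfl | ha
          · simp
          · exact absurd (by
              have := S₀.smul_mem a⁻¹ hy1
              rwa [smul_smul, inv_mul_cancel₀ ha, one_smul] at this) hv₂S₀
        have h1 := Submodule.finrank_sup_add_finrank_inf_eq S₀ (ℝ ∙ v₂)
        rw [hinf, finrank_bot, finrank_span_singleton hv₂0] at h1
        rw [hS₂def]
        omega
      have hS₂lt : ∀ y ∈ S₂, y ≠ 0 →
          ⟪y, (WithLp.toLp 2 (signlessLap G *ᵥ y) : EuclideanSpace ℝ (Fin n))⟫ < c * ‖y‖ ^ 2 := by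
        intro y hy hy0
        obtain ⟨x, hx, z, hz, rfl⟩ := Submodule.mem_sup.1 hy
        obtain ⟨a, rfl⟩ := Submodule.mem_span_singleton.1 hz
        obtain ⟨hx1, hx2⟩ := Submodule.mem_inf.1 hx
        have honex : ⟪one, x⟫ = 0 := (Submodule.mem_orthogonal _ x).1 hx2 one
          (Submodule.mem_span_singleton_self one)
        have hsumx : ∑ v, x v = 0 := by
          have h0 := honex
          rw [inner_dot] at h0
          simpa [dotProduct, hone_def] using h0
        have hsumv₂ : ∑ v, v₂ v = 0 := by
          rw [Finset.sum_congr rfl fun v (_ : v ∈ univ) => hv₂app v, Finset.sum_sub_distrib]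
          have e1 : ∑ _v : Fin n, s * 1 = (n : ℝ) * s := by
            simp [Finset.sum_const, Fintype.card_fin, mul_comm]
          have e2 : ∑ v : Fin n, (n : ℝ) * x0 v = (n : ℝ) * s := by
            rw [← Finset.mul_sum, hsum_x0]
          rw [e1, e2, sub_self]
        have happly : ∀ v, (x + a • v₂) v = x v + a * v₂ v := fun v => rfl
        have hsumy : ∑ v, (x + a • v₂) v = 0 := by
          rw [Finset.sum_congr rfl fun v (_ : v ∈ univ) => happly v, Finset.sum_add_distrib,
            hsumx, ← Finset.mul_sum, hsumv₂]
          ring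
        have hyK : (x + a • v₂) ∉ kerQ Gᶜ := by
          intro hK
          have hinner0 : ⟪x + a • v₂, x⟫ = 0 := (Submodule.mem_orthogonal _ x).1 hx1 _ hK
          have hv₂x : ⟪v₂, x⟫ = 0 := by
            rw [hv₂def, inner_sub_left, real_inner_smul_left, real_inner_smul_left, honex,
              (Submodule.mem_orthogonal _ x).1 hx1 x0 hx0K]
            ring
          rw [inner_add_left, real_inner_smul_left, hv₂x, mul_zero, add_zero] at hinner0
          have hx0' : x = 0 := inner_self_eq_zero.1 hinner0
          rcases eq_or_ne a 0 with rfl | ha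
          · apply hy0
            rw [hx0']
            simp
          · have hK' : a • v₂ ∈ kerQ Gᶜ := by rwa [hx0', zero_add] at hK
            have hcomb : a • v₂ + (a * (n : ℝ)) • x0 = (a * s) • one := by
              ext v
              show a * v₂ v + (a * (n : ℝ)) * x0 v = (a * s) * 1
              rw [hv₂app v]
              ring
            have hmemc : (a * s) • one ∈ kerQ Gᶜ := by
              rw [← hcomb]
              exact (kerQ Gᶜ).add_mem hK' ((kerQ Gᶜ).smul_mem _ hx0K)
            have hone_mem : one ∈ kerQ Gᶜ := by
              have hsm := (kerQ Gᶜ).smul_mem (a * s)⁻¹ hmemc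
              rwa [smul_smul, inv_mul_cancel₀ (mul_ne_zero ha hs0), one_smul] at hsm
            exact hone hone_mem
        exact hformlt _ hyK hsumy
      have hcnt := eig_count_le hM c S₂ hS₂lt
      rw [Fintype.card_fin] at hcnt
      have hKrank' := kerQ_rank_le (H := Gᶜ)
      omega
  · -- the complement has no edges at all
    right
    have hall : {cc : Gᶜ.ConnectedComponent | IsBipartiteComponent Gᶜ cc} = Set.univ := by
      apply Set.eq_univ_of_forall
      intro cc
      refine ⟨cc.supp, ∅, Set.union_empty _, Set.disjoint_empty _, ?_⟩
      intro u v _ hadj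
      exact absurd ⟨u, v, hadj⟩ hE
    rw [hall, Set.ncard_univ, Nat.card_eq_fintype_card]
    have hinj : Function.Injective (Gᶜ.connectedComponentMk) := by
      intro u v huv
      have hr : Gᶜ.Reachable u v := (SimpleGraph.ConnectedComponent.eq).1 huv
      obtain ⟨w⟩ := hr
      cases w with
      | nil => rfl
      | cons hadj _ => exact absurd ⟨_, _, hadj⟩ hE
    have hle : n ≤ Fintype.card Gᶜ.ConnectedComponent := by
      calc n = Fintype.card (Fin n) := (Fintype.card_fin n).symm
        _ ≤ _ := Fintype.card_le_of_injective _ hinj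
    omega
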